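/- Let H be a Hilbert space with complete orthonormal system (e_j)_{j≥1}, let M be the (unbounded) self-adjoint multiplication operator M(Σ c_j e_j) = Σ j c_j e_j with domain {Σ c_j e_j : Σ j² |c_j|² < ∞}, let P_n be the orthogonal projection onto span(e_n), and set T_n := M - 2n P_n. Then ‖(T_n + i)^{-1} - (M + i)^{-1}‖ = 2n/(n² + 1), so T_n → M in the resolvent (gap) metric γ(A₁,A₂) = ‖(A₁+i)^{-1} - (A₂+i)^{-1}‖. -/

import Mathlib

/-- Let `H` be a Hilbert space with complete orthonormal system `(e_j)_{j ≥ 1}`, let `M`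
be the self-adjoint multiplication operator `M e_j = j e_j`, `P_n` the orthogonal
projection onto `span (e_n)`, and `T_n := M - 2n P_n`.  Then
`‖(T_n + i)⁻¹ - (M + i)⁻¹‖ = 2n/(n² + 1)`, so `T_n → M` in the resolvent (gap) metric
`γ(A₁, A₂) = ‖(A₁ + i)⁻¹ - (A₂ + i)⁻¹‖`.

The resolvents are encoded by bounded operators `RM = (M + i)⁻¹` and `Rn n = (T_n + i)⁻¹`,
characterized by their diagonal action on the Hilbert basis:
`(M + i)⁻¹ e_j = (j + i)⁻¹ e_j`, and `(T_n + i)⁻¹ e_j = (j + i)⁻¹ e_j` for `j ≠ n`,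
`(T_n + i)⁻¹ e_n = (-n + i)⁻¹ e_n`. -/
theorem stmt8 {H : Type*} [NormedAddCommGroup H] [InnerProductSpace ℂ H] [CompleteSpace H]
    (b : HilbertBasis {j : ℕ // 1 ≤ j} ℂ H)
    (RM : H →L[ℂ] H) (Rn : ℕ → H →L[ℂ] H)
    (hRM : ∀ j : {j : ℕ // 1 ≤ j}, RM (b j) = (((j : ℕ) : ℂ) + Complex.I)⁻¹ • b j)
    (hRn : ∀ (n : ℕ) (j : {j : ℕ // 1 ≤ j}), Rn n (b j) =
      (if (j : ℕ) = n then (-(n : ℂ) + Complex.I)⁻¹ else (((j : ℕ) : ℂ) + Complex.I)⁻¹) • b j) :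
    (∀ n : ℕ, ‖Rn n - RM‖ = 2 * n / ((n : ℝ) ^ 2 + 1)) ∧
      Filter.Tendsto (fun n : ℕ => ‖Rn n - RM‖) Filter.atTop (nhds 0) := by
  have key : ∀ n : ℕ, ‖Rn n - RM‖ = 2 * n / ((n : ℝ) ^ 2 + 1) := by
    intro n
    have hdense : Dense ((Submodule.span ℂ (Set.range b)) : Set H) :=
      Submodule.dense_iff_topologicalClosure_eq_top.mpr b.dense_span
    rcases Nat.eq_zero_or_pos n with hn | hn
    · subst hn
      have : Rn 0 = RM := by
        refine ContinuousLinearMap.ext_on hdense ?_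
        rintro x ⟨j, rfl⟩
        rw [hRn, hRM, if_neg (by exact_mod_cast (Nat.one_le_iff_ne_zero.mp j.2))]
      simp [this]
    · set j₀ : {j : ℕ // 1 ≤ j} := ⟨n, hn⟩ with hj₀
      set c : ℂ := (-(n : ℂ) + Complex.I)⁻¹ - (((n : ℕ) : ℂ) + Complex.I)⁻¹ with hc
      have hne1 : (-(n : ℂ) + Complex.I) ≠ 0 := by
        intro h
        have := congrArg Complex.im h
        simp at this
      have hne2 : ((n : ℂ) + Complex.I) ≠ 0 := by
        intro h
        have := congrArg Complex.im h
        simp at this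
      have hcq : c = (2 * (n:ℂ)) / (-(((n:ℂ) ^ 2 + 1))) := by
        rw [hc, inv_sub_inv hne1 hne2,
          show ((n:ℂ) + Complex.I) - (-(n:ℂ) + Complex.I) = 2 * n by ring,
          show (-(n:ℂ) + Complex.I) * ((n:ℂ) + Complex.I) = -(((n:ℂ) ^ 2 + 1)) by
            linear_combination Complex.I_sq]
      have hnorm : ‖c‖ = 2 * n / ((n : ℝ) ^ 2 + 1) := by
        rw [hcq, norm_div, norm_neg,
          show (2 * (n:ℂ)) = ((2 * n : ℝ) : ℂ) by push_cast; ring,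
          show ((n:ℂ) ^ 2 + 1) = (((n:ℝ) ^ 2 + 1 : ℝ) : ℂ) by push_cast; ring,
          Complex.norm_real, Complex.norm_real,
          Real.norm_of_nonneg (by positivity), Real.norm_of_nonneg (by positivity)]
      have hD : Rn n - RM = c • ((innerSL ℂ (b j₀)).smulRight (b j₀)) := by
        refine ContinuousLinearMap.ext_on hdense ?_
        rintro x ⟨j, rfl⟩
        simp only [ContinuousLinearMap.sub_apply, ContinuousLinearMap.smul_apply,
          ContinuousLinearMap.smulRight_apply, innerSL_apply_apply]
        rw [hRn, hRM]
        have hin := orthonormal_iff_ite.mp b.orthonormal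
        rcases eq_or_ne j j₀ with rfl | hj
        · rw [if_pos rfl, hin j₀ j₀, if_pos rfl]
          simp [hc, sub_smul, hj₀]
        · rw [if_neg (by simpa [hj₀, Subtype.ext_iff] using hj), hin j₀ j,
            if_neg (Ne.symm hj)]
          simp
      rw [hD, norm_smul, ContinuousLinearMap.norm_smulRight_apply, innerSL_apply_norm,
        b.orthonormal.1 j₀, hnorm]
      ring
  refine ⟨key, ?_⟩
  simp only [key]
  have h0 : Filter.Tendsto (fun n : ℕ => 2 / (n : ℝ)) Filter.atTop (nhds 0) :=
    tendsto_const_div_atTop_nhds_zero_nat 2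
  refine squeeze_zero' ?_ ?_ h0
  · filter_upwards with n; positivity
  · filter_upwards [Filter.eventually_ge_atTop 1] with n hn
    rw [div_le_div_iff₀ (by positivity) (by exact_mod_cast hn)]
    have : (1:ℝ) ≤ n := by exact_mod_cast hn
    nlinarith
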